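/- Fix a finite nonempty alphabet Σ equipped with a linear order, and let Ξ := Σ ⊕ Σ'' ⊕ Sym with φ : FL_Σ → Ξ* the canonical encoding. A refusal-testing observation over Σ is a sequence ⟨X₀,a₁,X₁,…,aₙ,Xₙ⟩ with each aᵢ ∈ Σ and each Xᵢ either a subset of Σ (a refusal set) or •. Define the refusal testing relation rt_Σ, relating the observation ⟨A₀,a₁,…,aₙ,Aₙ⟩ ∈ FL_Σ to every ⟨X₀,a₁,…,aₙ,Xₙ⟩ such that for each i: Xᵢ ⊆ Σ \ Aᵢ if Aᵢ ≠ •, and Xᵢ = • if Aᵢ = •. Let Θ := Σ ⊕ Σ' ⊕ Sym, where Σ' is a disjoint copy of Σ, and define ψ(⟨X₀,a₁,…,aₙ,Xₙ⟩) = enc(X₀) a₁ enc(X₁) … aₙ enc(Xₙ), where enc(•) is the empty word and enc(X) is the symbol ⟨ followed by the primed copies of the elements of X in increasing order followed by the symbol ⟩. Then: (a) there exists a nondeterministic finite automaton with finitely many states over the alphabet Ξ ⊕ Θ recognising the relation {(φ(x), ψ(y)) : (x, y) ∈ rt_Σ}; and (b) ψ is order-reflecting, i.e. whenever ψ(y₁)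 is a prefix of ψ(y₂) then y₁ ≼ y₂, where ≼ is the relation induced by rt_Σ from the extension order on FL_Σ. -/

import Mathlib

/-- A finite linear observation over alphabet `α`: an initial annotation `A₀`
(`none` = `•`, `some A` = a stable acceptance set) together with a list of pairs
`(aᵢ, Aᵢ)` of an event and the following annotation. -/
abbrev FLObs (α : Type) := Option (Finset α) × List (α × Option (Finset α))

/-- Extension on annotations: either they are equal or the first is `•`. -/
def optExt {α : Type} (A B : Option (Finset α)) : Prop := A = B ∨ A = none

/-- The extension order on finite linear observations. -/
def extLE {α : Type} (u v : FLObs α) : Prop :=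
  optExt u.1 v.1 ∧ u.2.length ≤ v.2.length ∧
    ∀ (i : ℕ) (hi : i < u.2.length) (hj : i < v.2.length),
      (u.2.get ⟨i, hi⟩).1 = (v.2.get ⟨i, hj⟩).1 ∧
        optExt (u.2.get ⟨i, hi⟩).2 (v.2.get ⟨i, hj⟩).2

/-- The four symbols `⟨`, `⟩`, `,`, `•` used by the canonical encoding. -/
inductive MSym : Type
  | lang | rang | comma | bullet
deriving DecidableEq

instance : Fintype MSym where
  elems := {MSym.lang, MSym.rang, MSym.comma, MSym.bullet}
  complete := by intro x; cases x <;> simp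

/-- The alphabet `Ξ = Σ ⊕ Σ'' ⊕ MSym` of the canonical encoding: `Sum.inl a` is the
event `a`, `Sum.inr (Sum.inl a)` is the double-primed copy `a''`, and
`Sum.inr (Sum.inr s)` is a symbol. -/
abbrev Xi (α : Type) := α ⊕ α ⊕ MSym

/-- Encoding of an annotation: `•` is the symbol `•`, a set is the list of the
double-primed copies of its elements in increasing order. -/
def encAnnXi {α : Type} [LinearOrder α] : Option (Finset α) → List (Xi α)
  | none => [Sum.inr (Sum.inr MSym.bullet)]
  | some A => (A.sort (· ≤ ·)).map (fun a => Sum.inr (Sum.inl a))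

/-- The canonical encoding `φ` of finite linear observations: the observation
`⟨A₀, a₁, A₁, …, aₙ, Aₙ⟩` is written as the string `⟨ A₀ , a₁ , A₁ , … , aₙ , Aₙ ⟩`. -/
def phi {α : Type} [LinearOrder α] (u : FLObs α) : List (Xi α) :=
  [Sum.inr (Sum.inr MSym.lang)] ++ encAnnXi u.1 ++
    (u.2.map (fun p => [Sum.inr (Sum.inr MSym.comma), Sum.inl p.1,
      Sum.inr (Sum.inr MSym.comma)] ++ encAnnXi p.2)).flatten ++
    [Sum.inr (Sum.inr MSym.rang)]

/-- An NFA over `α ⊕ β` recognises a relation `R ⊆ α* × β*` if `R s t` holds exactly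
when the NFA accepts some interleaving of `s` (as left letters) and `t` (as right
letters). -/
def Recognises {α β Q : Type} (A : NFA (α ⊕ β) Q) (R : List α → List β → Prop) : Prop :=
  ∀ (s : List α) (t : List β),
    R s t ↔ ∃ w ∈ A.accepts, w.filterMap Sum.getLeft? = s ∧ w.filterMap Sum.getRight? = t

/-- The relation on `O` induced by a relation `M : S → O → Prop` from a preorder
`le` on `S`. -/
def inducedRel {S O : Type} (le : S → S → Prop) (M : S → O → Prop) (y₁ y₂ : O) : Prop :=
  ∀ b, M b y₂ → ∃ a, M a y₁ ∧ le a b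

/-- The final annotation `Aₙ` of an observation. -/
def lastAnn {α : Type} (u : FLObs α) : Option (Finset α) :=
  match u.2.getLast? with
  | none => u.1
  | some p => p.2


/-- Compatibility of a refusal annotation `X` with an acceptance annotation `A`:
if `A = •` then `X = •`; if `A` is an acceptance set then `X` is a refusal set
disjoint from `A` (i.e. `X ⊆ Σ \ A`). -/
def compat {α : Type} (A X : Option (Finset α)) : Prop :=
  match A, X with
  | none, none => True
  | some A, some Y => ∀ a ∈ Y, a ∉ A
  | _, _ => False

/-- The output alphabet `Θ = Σ ⊕ Σ' ⊕ Sym`: `Sum.inl a` is the event `a`,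
`Sum.inr (Sum.inl a)` is the primed copy `a'`, and `Sum.inr (Sum.inr s)` a symbol. -/
abbrev Theta (α : Type) := α ⊕ α ⊕ MSym

/-- Encoding of an optional refusal set: `•` contributes the empty word and a set `X`
contributes `⟨` followed by the primed copies of its elements in increasing order
followed by `⟩`. -/
def encRef {α : Type} [LinearOrder α] : Option (Finset α) → List (Theta α)
  | none => []
  | some X => [Sum.inr (Sum.inr MSym.lang)] ++
      (X.sort (· ≤ ·)).map (fun a => Sum.inr (Sum.inl a)) ++ [Sum.inr (Sum.inr MSym.rang)]

/-- The refusal testing relation: it relates `⟨A₀,a₁,…,aₙ,Aₙ⟩ ∈ FL_Σ` to every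
refusal-testing observation `⟨X₀,a₁,…,aₙ,Xₙ⟩` (same events) such that for each `i`,
`Xᵢ ⊆ Σ \ Aᵢ` if `Aᵢ ≠ •` and `Xᵢ = •` if `Aᵢ = •`. A refusal-testing observation is
represented in the same way as a finite linear observation, with annotations read as
refusal sets. -/
def rtRel {α : Type} (u v : FLObs α) : Prop :=
  compat u.1 v.1 ∧ u.2.length = v.2.length ∧
    ∀ (i : ℕ) (hi : i < u.2.length) (hj : i < v.2.length),
      (u.2.get ⟨i, hi⟩).1 = (v.2.get ⟨i, hj⟩).1 ∧
        compat (u.2.get ⟨i, hi⟩).2 (v.2.get ⟨i, hj⟩).2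

/-- The output encoding for refusal testing:
`ψ ⟨X₀,a₁,…,aₙ,Xₙ⟩ = enc(X₀) a₁ enc(X₁) … aₙ enc(Xₙ)` where `enc(•)` is empty and
`enc(X)` is `⟨` followed by the primed copies of the elements of `X` in increasing
order followed by `⟩`. -/
def psiRT {α : Type} [LinearOrder α] (v : FLObs α) : List (Theta α) :=
  encRef v.1 ++ (v.2.map (fun p => Sum.inl p.1 :: encRef p.2)).flatten

namespace RTProof

variable {α : Type} [LinearOrder α]

lemma prim_prefix : ∀ (s₁ : List α) (s₂ : List α) (t₁ t₂ : List (Theta α)),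
    (s₁.map (fun a => Sum.inr (Sum.inl a)) ++ Sum.inr (Sum.inr MSym.rang) :: t₁) <+:
      (s₂.map (fun a => Sum.inr (Sum.inl a)) ++ Sum.inr (Sum.inr MSym.rang) :: t₂) →
    s₁ = s₂ ∧ t₁ <+: t₂ := by
  intro s₁
  induction s₁ with
  | nil =>
    intro s₂ t₁ t₂ h
    cases s₂ with
    | nil => simpa using h
    | cons b s₂ =>
      simp only [List.map_nil, List.nil_append, List.map_cons, List.cons_append,
        List.cons_prefix_cons] at h
      exact absurd h.1 (by simp)
  | cons a s₁ ih =>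
    intro s₂ t₁ t₂ h
    cases s₂ with
    | nil =>
      simp only [List.map_cons, List.cons_append, List.map_nil, List.nil_append,
        List.cons_prefix_cons] at h
      exact absurd h.1 (by simp)
    | cons b s₂ =>
      simp only [List.map_cons, List.cons_append, List.cons_prefix_cons] at h
      obtain ⟨hab, h⟩ := h
      obtain rfl : a = b := by simpa using hab
      obtain ⟨h1, h2⟩ := ih s₂ t₁ t₂ h
      exact ⟨by rw [h1], h2⟩

/-- the tail of `psiRT` is empty or starts with an event letter -/
lemma tail_shape (l : List (α × Option (Finset α))) :
    (l.map (fun p => Sum.inl p.1 :: encRef p.2)).flatten = ([] : List (Theta α)) ∨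
      ∃ (a : α) (r : List (Theta α)), (l.map (fun p => Sum.inl p.1 :: encRef p.2)).flatten = Sum.inl a :: r := by
  cases l with
  | nil => exact Or.inl rfl
  | cons p l => exact Or.inr ⟨p.1, encRef p.2 ++ (l.map (fun p => Sum.inl p.1 :: encRef p.2)).flatten, by simp⟩

lemma enc_prefix {X₁ X₂ : Option (Finset α)} {t₁ t₂ : List (Theta α)}
    (h₁ : t₁ = [] ∨ ∃ a r, t₁ = Sum.inl a :: r)
    (h₂ : t₂ = [] ∨ ∃ a r, t₂ = Sum.inl a :: r)
    (h : encRef X₁ ++ t₁ <+: encRef X₂ ++ t₂) :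
    (X₁ = X₂ ∧ t₁ <+: t₂) ∨ (X₁ = none ∧ t₁ = []) := by
  cases X₁ with
  | none =>
    cases X₂ with
    | none => exact Or.inl ⟨rfl, by simpa [encRef] using h⟩
    | some S₂ =>
      rcases h₁ with rfl | ⟨a, r, rfl⟩
      · exact Or.inr ⟨rfl, rfl⟩
      · exfalso
        simp only [encRef, List.nil_append, List.append_assoc, List.cons_append,
          List.cons_prefix_cons] at h
        exact absurd h.1 (by simp)
  | some S₁ =>
    cases X₂ with
    | none =>
      exfalso
      rcases h₂ with rfl | ⟨a, r, rfl⟩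
      · have := h.length_le
        simp [encRef] at this
      · simp only [encRef, List.append_nil, List.nil_append, List.append_assoc,
          List.cons_append, List.cons_prefix_cons] at h
        exact absurd h.1 (by simp)
    | some S₂ =>
      left
      simp only [encRef, List.append_assoc, List.cons_append, List.nil_append,
        List.cons_prefix_cons, List.singleton_append] at h
      obtain ⟨-, h⟩ := h
      obtain ⟨h1, h2⟩ := prim_prefix _ _ _ _ h
      refine ⟨?_, h2⟩
      congr 1
      have : S₁.sort (· ≤ ·) = S₂.sort (· ≤ ·) := h1
      ext a
      rw [← Finset.mem_sort (· ≤ ·), this, Finset.mem_sort]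

lemma prefix_extLE : ∀ (l₁ : List (α × Option (Finset α))) (X₁ X₂ : Option (Finset α))
    (l₂ : List (α × Option (Finset α))),
    psiRT (X₁, l₁) <+: psiRT (X₂, l₂) → extLE (X₁, l₁) (X₂, l₂) := by
  intro l₁
  induction l₁ with
  | nil =>
    intro X₁ X₂ l₂ h
    rcases enc_prefix (by simp) (tail_shape l₂) h with ⟨h1, -⟩ | ⟨h1, -⟩
    · exact ⟨Or.inl h1, by simp, by simp⟩
    · exact ⟨Or.inr h1, by simp, by simp⟩
  | cons p l₁ ih =>
    intro X₁ X₂ l₂ h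
    obtain ⟨a, Y⟩ := p
    rcases enc_prefix (Or.inr ⟨a, encRef Y ++ (l₁.map (fun p => Sum.inl p.1 :: encRef p.2)).flatten, by simp⟩) (tail_shape l₂) h with ⟨h1, h2⟩ | ⟨-, h1⟩
    · cases l₂ with
      | nil =>
        exfalso
        have := h2.length_le
        simp at this
      | cons q l₂ =>
        obtain ⟨b, Z⟩ := q
        simp only [List.map_cons, List.flatten_cons, List.cons_append,
          List.cons_prefix_cons] at h2
        obtain ⟨hev, h2⟩ := h2
        obtain rfl : a = b := by simpa using hev
        have h3 : psiRT (Y, l₁) <+: psiRT (Z, l₂) := by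
          simpa [psiRT] using h2
        obtain ⟨hopt, hlen, hidx⟩ := ih Y Z l₂ h3
        refine ⟨Or.inl h1, by simpa using Nat.succ_le_succ hlen, ?_⟩
        intro i hi hj
        cases i with
        | zero => exact ⟨rfl, hopt⟩
        | succ i =>
          exact hidx i (by simpa using hi) (by simpa using hj)
    · simp at h1

end RTProof

namespace RTProof
variable {α : Type} [LinearOrder α]

lemma partB (y₁ y₂ : FLObs α) (h : psiRT y₁ <+: psiRT y₂) :
    inducedRel extLE rtRel y₁ y₂ := by
  obtain ⟨X₁, l₁⟩ := y₁
  obtain ⟨X₂, l₂⟩ := y₂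
  obtain ⟨hopt, hlen, hidx⟩ := prefix_extLE l₁ X₁ X₂ l₂ h
  rintro ⟨B, lb⟩ ⟨hcb, hlb, hib⟩
  simp only at hcb hlb hib hopt hlen hidx
  refine ⟨(X₁.bind fun _ => B,
    (lb.zip l₁).map (fun pq => (pq.1.1, pq.2.2.bind fun _ => pq.1.2))), ?_, ?_⟩
  · refine ⟨?_, ?_, ?_⟩
    · rcases hopt with rfl | rfl
      · cases X₁ with
        | none => simp [compat]
        | some S => simpa [compat] using hcb
      · simp [compat]
    · simp [hlb, hlen]
    · intro i hi hj
      have hjl : i < l₂.length := lt_of_lt_of_le hj hlen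
      have hil : i < lb.length := by omega
      have h1 := hib i hil hjl
      have h2 := hidx i hj hjl
      simp only [List.get_eq_getElem, List.getElem_map, List.getElem_zip] at *
      constructor
      · rw [h1.1, h2.1]
      · rcases h2.2 with heq | hnone
        · rw [heq]
          cases hZ : l₂[i].2 with
          | none => simp [compat]
          | some S =>
            have := h1.2
            rw [hZ] at this
            simpa [compat] using this
        · rw [hnone]
          simp [compat]
  · refine ⟨?_, ?_, ?_⟩
    · cases X₁ with
      | none => exact Or.inr rfl
      | some S => exact Or.inl rfl
    · simp only [List.length_map, List.length_zip]
      omega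
    · intro i hi hj
      have hil : i < l₁.length := by
        simp only [List.length_map, List.length_zip] at hi; omega
      have hbl : i < lb.length := by simpa using hj
      simp only [List.get_eq_getElem, List.getElem_map, List.getElem_zip]
      refine ⟨by trivial, ?_⟩
      cases h' : l₁[i].2 with
      | none => exact Or.inr (by simp [h'])
      | some S => exact Or.inl (by simp [h'])
  
end RTProof

namespace RTProof

/-- membership in evalFrom decomposes over the start set -/
lemma mem_evalFrom_iff {A σ : Type} (M : NFA A σ) (q : σ) :
    ∀ (w : List A) (S : Set σ), q ∈ M.evalFrom S w ↔ ∃ q₀ ∈ S, q ∈ M.evalFrom {q₀} w := by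
  intro w
  induction w with
  | nil => intro S; simp [NFA.evalFrom]
  | cons c w ih =>
    intro S
    have h1 : M.evalFrom S (c :: w) = M.evalFrom (M.stepSet S c) w := rfl
    rw [h1, ih]
    constructor
    · rintro ⟨q₁, hq₁, hq⟩
      rw [NFA.mem_stepSet] at hq₁
      obtain ⟨q₀, hq₀, hstep⟩ := hq₁
      refine ⟨q₀, hq₀, ?_⟩
      have h2 : M.evalFrom {q₀} (c :: w) = M.evalFrom (M.stepSet {q₀} c) w := rfl
      rw [h2, ih]
      refine ⟨q₁, ?_, hq⟩
      rw [NFA.mem_stepSet]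
      exact ⟨q₀, rfl, hstep⟩
    · rintro ⟨q₀, hq₀, hq⟩
      have h2 : M.evalFrom {q₀} (c :: w) = M.evalFrom (M.stepSet {q₀} c) w := rfl
      rw [h2, ih] at hq
      obtain ⟨q₁, hq₁, hq⟩ := hq
      rw [NFA.mem_stepSet] at hq₁
      obtain ⟨q₀', hq₀', hstep⟩ := hq₁
      obtain rfl : q₀' = q₀ := hq₀'
      refine ⟨q₁, ?_, hq⟩
      rw [NFA.mem_stepSet]
      exact ⟨_, hq₀, hstep⟩

/-- transporting an NFA along an equivalence of state spaces -/
lemma nfa_transport {A σ τ : Type} (M : NFA A σ) (e : σ ≃ τ) :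
    ∃ M' : NFA A τ, M'.accepts = M.accepts := by
  refine ⟨⟨fun q c => e '' M.step (e.symm q) c, e '' M.start, e '' M.accept⟩, ?_⟩
  set M' : NFA A τ := ⟨fun q c => e '' M.step (e.symm q) c, e '' M.start, e '' M.accept⟩
  have hstep : ∀ S c, M'.stepSet (e '' S) c = e '' M.stepSet S c := by
    intro S c
    ext q
    simp only [NFA.stepSet, Set.mem_iUnion, Set.mem_image]
    constructor
    · rintro ⟨p, ⟨⟨p₀, hp₀, rfl⟩, q₀, hq₀, rfl⟩⟩
      simp only [Equiv.symm_apply_apply] at hq₀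
      exact ⟨q₀, ⟨p₀, hp₀, hq₀⟩, rfl⟩
    · rintro ⟨q₀, ⟨p₀, hp₀, hq₀⟩, rfl⟩
      refine ⟨e p₀, ⟨p₀, hp₀, rfl⟩, q₀, ?_, rfl⟩
      simpa using hq₀
  have heval : ∀ w S, M'.evalFrom (e '' S) w = e '' M.evalFrom S w := by
    intro w
    induction w with
    | nil => intro S; rfl
    | cons c w ih =>
      intro S
      have h1 : M'.evalFrom (e '' S) (c :: w) = M'.evalFrom (M'.stepSet (e '' S) c) w := rfl
      rw [h1, hstep]
      exact ih _
  ext w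
  rw [NFA.mem_accepts, NFA.mem_accepts]
  show (∃ q ∈ e '' M.accept, q ∈ M'.evalFrom (e '' M.start) w) ↔ _
  rw [heval]
  constructor
  · rintro ⟨q, ⟨q₀, hq₀, rfl⟩, q₁, hq₁, hq⟩
    obtain rfl : q₁ = q₀ := e.injective hq
    exact ⟨_, hq₀, hq₁⟩
  · rintro ⟨q, hq, hq'⟩
    exact ⟨e q, ⟨q, hq, rfl⟩, q, hq', rfl⟩

variable {α : Type} [LinearOrder α]

/-- states of the recognising automaton -/
inductive St (α : Type) : Type
  | q0 | q1 | q2 | q4 | q6 | qF : St α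
  | q3 : Option α → St α
  | q5 : α → St α
deriving DecidableEq

instance [Fintype α] : Fintype (St α) :=
  Fintype.ofEquiv (Unit ⊕ Unit ⊕ Unit ⊕ Unit ⊕ Unit ⊕ Unit ⊕ Option α ⊕ α)
  { toFun := fun x => match x with
      | Sum.inl _ => .q0
      | Sum.inr (Sum.inl _) => .q1
      | Sum.inr (Sum.inr (Sum.inl _)) => .q2
      | Sum.inr (Sum.inr (Sum.inr (Sum.inl _))) => .q4
      | Sum.inr (Sum.inr (Sum.inr (Sum.inr (Sum.inl _)))) => .q6
      | Sum.inr (Sum.inr (Sum.inr (Sum.inr (Sum.inr (Sum.inl _))))) => .qF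
      | Sum.inr (Sum.inr (Sum.inr (Sum.inr (Sum.inr (Sum.inr (Sum.inl o)))))) => .q3 o
      | Sum.inr (Sum.inr (Sum.inr (Sum.inr (Sum.inr (Sum.inr (Sum.inr a)))))) => .q5 a
    invFun := fun q => match q with
      | .q0 => Sum.inl ()
      | .q1 => Sum.inr (Sum.inl ())
      | .q2 => Sum.inr (Sum.inr (Sum.inl ()))
      | .q4 => Sum.inr (Sum.inr (Sum.inr (Sum.inl ())))
      | .q6 => Sum.inr (Sum.inr (Sum.inr (Sum.inr (Sum.inl ()))))
      | .qF => Sum.inr (Sum.inr (Sum.inr (Sum.inr (Sum.inr (Sum.inl ())))))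
      | .q3 o => Sum.inr (Sum.inr (Sum.inr (Sum.inr (Sum.inr (Sum.inr (Sum.inl o))))))
      | .q5 a => Sum.inr (Sum.inr (Sum.inr (Sum.inr (Sum.inr (Sum.inr (Sum.inr a))))))
    left_inv := by rintro (_|_|_|_|_|_|o|a) <;> rfl
    right_inv := by intro q; cases q <;> rfl }

/-- transition function -/
def delta : St α → (Xi α ⊕ Theta α) → Set (St α) := fun q c =>
  match q, c with
  | .q0, Sum.inl (Sum.inr (Sum.inr MSym.lang)) => {.q1}
  | .q1, Sum.inl (Sum.inr (Sum.inr MSym.bullet)) => {.q2}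
  | .q1, Sum.inr (Sum.inr (Sum.inr MSym.lang)) => {.q3 none}
  | .q3 o, Sum.inl (Sum.inr (Sum.inl a)) => {q' | q' = .q3 (some a) ∧ ∀ c ∈ o, c < a}
  | .q3 o, Sum.inr (Sum.inr (Sum.inl a)) => {q' | q' = .q3 (some a) ∧ ∀ c ∈ o, c < a}
  | .q3 _, Sum.inr (Sum.inr (Sum.inr MSym.rang)) => {.q2}
  | .q2, Sum.inl (Sum.inr (Sum.inr MSym.rang)) => {.qF}
  | .q2, Sum.inl (Sum.inr (Sum.inr MSym.comma)) => {.q4}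
  | .q4, Sum.inl (Sum.inl a) => {.q5 a}
  | .q5 a, Sum.inr (Sum.inl b) => {q' | q' = .q6 ∧ b = a}
  | .q6, Sum.inl (Sum.inr (Sum.inr MSym.comma)) => {.q1}
  | _, _ => ∅

/-- the recognising automaton (over its natural state space) -/
def NFA0 (α : Type) [LinearOrder α] : NFA (Xi α ⊕ Theta α) (St α) :=
  ⟨delta, {.q0}, {.qF}⟩

/-- accepting runs, as an inductive predicate -/
inductive Accept : St α → List (Xi α ⊕ Theta α) → Prop
  | f : Accept .qF []
  | c2close {w} : Accept .qF w → Accept .q2 (Sum.inl (Sum.inr (Sum.inr MSym.rang)) :: w)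
  | c2comma {w} : Accept .q4 w → Accept .q2 (Sum.inl (Sum.inr (Sum.inr MSym.comma)) :: w)
  | c4 {a w} : Accept (.q5 a) w → Accept .q4 (Sum.inl (Sum.inl a) :: w)
  | c5 {a w} : Accept .q6 w → Accept (.q5 a) (Sum.inr (Sum.inl a) :: w)
  | c6 {w} : Accept .q1 w → Accept .q6 (Sum.inl (Sum.inr (Sum.inr MSym.comma)) :: w)
  | c1b {w} : Accept .q2 w → Accept .q1 (Sum.inl (Sum.inr (Sum.inr MSym.bullet)) :: w)
  | c1o {w} : Accept (.q3 none) w → Accept .q1 (Sum.inr (Sum.inr (Sum.inr MSym.lang)) :: w)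
  | c3c {o w} : Accept .q2 w → Accept (.q3 o) (Sum.inr (Sum.inr (Sum.inr MSym.rang)) :: w)
  | c3l {o a w} : (∀ c ∈ o, c < a) → Accept (.q3 (some a)) w →
      Accept (.q3 o) (Sum.inl (Sum.inr (Sum.inl a)) :: w)
  | c3r {o a w} : (∀ c ∈ o, c < a) → Accept (.q3 (some a)) w →
      Accept (.q3 o) (Sum.inr (Sum.inr (Sum.inl a)) :: w)
  | c0 {w} : Accept .q1 w → Accept .q0 (Sum.inl (Sum.inr (Sum.inr MSym.lang)) :: w)

lemma step_accept {q q' : St α} {c : Xi α ⊕ Theta α} {w}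
    (hq' : q' ∈ delta q c) (h : Accept q' w) : Accept q (c :: w) := by
  cases q <;> rcases c with ((a|a|s)|(a|a|s)) <;> (try cases s) <;>
    (try simp only [delta, Set.mem_empty_iff_false, Set.mem_singleton_iff,
      Set.mem_setOf_eq] at hq') <;>
  first
    | (subst hq'; first
        | exact Accept.c0 h
        | exact Accept.c2close h
        | exact Accept.c2comma h
        | exact Accept.c4 h
        | exact Accept.c6 h
        | exact Accept.c1b h
        | exact Accept.c1o h
        | exact Accept.c3c h)
    | (obtain ⟨rfl, h'⟩ := hq'; first
        | exact Accept.c3l h' h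
        | exact Accept.c3r h' h
        | (subst h'; exact Accept.c5 h))

lemma accept_of_mem {w : List (Xi α ⊕ Theta α)} :
    ∀ (q : St α), St.qF ∈ (NFA0 α).evalFrom {q} w → Accept q w := by
  induction w with
  | nil =>
    intro q h
    obtain rfl : q = .qF := (Set.mem_singleton_iff.mp h).symm
    exact Accept.f
  | cons c w ih =>
    intro q h
    have h1 : (NFA0 α).evalFrom {q} (c :: w) = (NFA0 α).evalFrom ((NFA0 α).stepSet {q} c) w := rfl
    rw [h1] at h
    have h2 : (NFA0 α).stepSet {q} c = delta q c := by
      simp [NFA.stepSet, NFA0]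
    rw [h2, mem_evalFrom_iff] at h
    obtain ⟨q', hq', h⟩ := h
    exact step_accept hq' (ih q' h)

lemma cons_eval {q q' : St α} {c : Xi α ⊕ Theta α} {w} (hq' : q' ∈ delta q c)
    (h : St.qF ∈ (NFA0 α).evalFrom {q'} w) : St.qF ∈ (NFA0 α).evalFrom {q} (c :: w) := by
  have h1 : (NFA0 α).evalFrom {q} (c :: w) = (NFA0 α).evalFrom ((NFA0 α).stepSet {q} c) w := rfl
  have h2 : (NFA0 α).stepSet {q} c = delta q c := by simp [NFA.stepSet, NFA0]
  rw [h1, h2, mem_evalFrom_iff]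
  exact ⟨q', hq', h⟩

lemma mem_of_accept {q : St α} {w : List (Xi α ⊕ Theta α)} (h : Accept q w) :
    St.qF ∈ (NFA0 α).evalFrom {q} w := by
  induction h with
  | f => exact rfl
  | c2close _ ih => exact cons_eval rfl ih
  | c2comma _ ih => exact cons_eval rfl ih
  | c4 _ ih => exact cons_eval rfl ih
  | c5 _ ih => exact cons_eval ⟨rfl, rfl⟩ ih
  | c6 _ ih => exact cons_eval rfl ih
  | c1b _ ih => exact cons_eval rfl ih
  | c1o _ ih => exact cons_eval rfl ih
  | c3c _ ih => exact cons_eval rfl ih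
  | c3l hlt _ ih => exact cons_eval ⟨rfl, hlt⟩ ih
  | c3r hlt _ ih => exact cons_eval ⟨rfl, hlt⟩ ih
  | c0 _ ih => exact cons_eval rfl ih

lemma accepts_iff (w : List (Xi α ⊕ Theta α)) :
    w ∈ (NFA0 α).accepts ↔ Accept .q0 w := by
  rw [NFA.mem_accepts]
  constructor
  · rintro ⟨q, hq, hw⟩
    obtain rfl : q = .qF := hq
    have : (NFA0 α).start = {St.q0} := rfl
    rw [this] at hw
    rw [mem_evalFrom_iff] at hw
    obtain ⟨q₀, hq₀, hw⟩ := hw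
    obtain rfl : q₀ = .q0 := hq₀
    exact accept_of_mem _ hw
  · intro h
    refine ⟨.qF, rfl, ?_⟩
    have : (NFA0 α).start = {St.q0} := rfl
    rw [this]
    exact mem_of_accept h

end RTProof

namespace RTProof
variable {α : Type} [LinearOrder α]

def projL (w : List (Xi α ⊕ Theta α)) : List (Xi α) := w.filterMap Sum.getLeft?
def projR (w : List (Xi α ⊕ Theta α)) : List (Theta α) := w.filterMap Sum.getRight?

@[simp] lemma projL_nil : projL ([] : List (Xi α ⊕ Theta α)) = [] := rfl
@[simp] lemma projR_nil : projR ([] : List (Xi α ⊕ Theta α)) = [] := rfl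
@[simp] lemma projL_inl (x : Xi α) (w) : projL (Sum.inl x :: w) = x :: projL w := rfl
@[simp] lemma projL_inr (x : Theta α) (w) : projL (Sum.inr x :: w) = projL w := rfl
@[simp] lemma projR_inl (x : Xi α) (w) : projR (Sum.inl x :: w) = projR w := rfl
@[simp] lemma projR_inr (x : Theta α) (w) : projR (Sum.inr x :: w) = x :: projR w := rfl
@[simp] lemma projL_append (u v : List (Xi α ⊕ Theta α)) :
    projL (u ++ v) = projL u ++ projL v := by simp [projL, List.filterMap_append]
@[simp] lemma projR_append (u v : List (Xi α ⊕ Theta α)) :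
    projR (u ++ v) = projR u ++ projR v := by simp [projR, List.filterMap_append]

def pairsL (lx : List (α × Option (Finset α))) : List (Xi α) :=
  (lx.map (fun p => [Sum.inr (Sum.inr MSym.comma), Sum.inl p.1,
    Sum.inr (Sum.inr MSym.comma)] ++ encAnnXi p.2)).flatten

def pairsR (ly : List (α × Option (Finset α))) : List (Theta α) :=
  (ly.map (fun p => Sum.inl p.1 :: encRef p.2)).flatten

def Rel (lx ly : List (α × Option (Finset α))) : Prop :=
  List.Forall₂ (fun p q => p.1 = q.1 ∧ compat p.2 q.2) lx ly

lemma rtRel_iff {A X : Option (Finset α)} {lx ly : List (α × Option (Finset α))} :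
    rtRel (A, lx) (X, ly) ↔ compat A X ∧ Rel lx ly := by
  constructor
  · rintro ⟨h1, h2, h3⟩
    exact ⟨h1, List.forall₂_of_length_eq_of_get h2 h3⟩
  · rintro ⟨h1, h2⟩
    exact ⟨h1, h2.length_eq, h2.get⟩

def Mot : St α → List (Xi α ⊕ Theta α) → Prop
  | .qF, w => w = []
  | .q2, w => ∃ lx ly, Rel lx ly ∧
      projL w = pairsL lx ++ [Sum.inr (Sum.inr MSym.rang)] ∧ projR w = pairsR ly
  | .q4, w => ∃ a A X lx ly, compat A X ∧ Rel lx ly ∧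
      projL w = Sum.inl a :: Sum.inr (Sum.inr MSym.comma) ::
        (encAnnXi A ++ pairsL lx ++ [Sum.inr (Sum.inr MSym.rang)]) ∧
      projR w = Sum.inl a :: (encRef X ++ pairsR ly)
  | .q5 a, w => ∃ A X lx ly, compat A X ∧ Rel lx ly ∧
      projL w = Sum.inr (Sum.inr MSym.comma) ::
        (encAnnXi A ++ pairsL lx ++ [Sum.inr (Sum.inr MSym.rang)]) ∧
      projR w = Sum.inl a :: (encRef X ++ pairsR ly)
  | .q6, w => ∃ A X lx ly, compat A X ∧ Rel lx ly ∧
      projL w = Sum.inr (Sum.inr MSym.comma) ::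
        (encAnnXi A ++ pairsL lx ++ [Sum.inr (Sum.inr MSym.rang)]) ∧
      projR w = encRef X ++ pairsR ly
  | .q1, w => ∃ A X lx ly, compat A X ∧ Rel lx ly ∧
      projL w = encAnnXi A ++ pairsL lx ++ [Sum.inr (Sum.inr MSym.rang)] ∧
      projR w = encRef X ++ pairsR ly
  | .q3 o, w => ∃ (A X : Finset α) (lx ly : List (α × Option (Finset α))), Disjoint A X ∧ (∀ b ∈ A ∪ X, ∀ c ∈ o, c < b) ∧
      Rel lx ly ∧
      projL w = (A.sort (· ≤ ·)).map (fun a => Sum.inr (Sum.inl a)) ++ pairsL lx ++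
        [Sum.inr (Sum.inr MSym.rang)] ∧
      projR w = (X.sort (· ≤ ·)).map (fun a => Sum.inr (Sum.inl a)) ++
        Sum.inr (Sum.inr MSym.rang) :: pairsR ly
  | .q0, w => ∃ x y : FLObs α, rtRel x y ∧ projL w = phi x ∧ projR w = psiRT y

lemma acc_mot {q : St α} {w} (h : Accept q w) : Mot q w := by
  induction h with
  | f => rfl
  | c2close _ ih =>
    rename_i w' hacc
    obtain rfl : w' = [] := ih
    exact ⟨[], [], List.Forall₂.nil, by simp [pairsL], by simp [pairsR]⟩
  | c2comma _ ih =>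
    obtain ⟨a, A, X, lx, ly, hc, hrel, hL, hR⟩ := ih
    refine ⟨(a, A) :: lx, (a, X) :: ly, List.Forall₂.cons ⟨rfl, hc⟩ hrel, ?_, ?_⟩
    · simp [hL, pairsL]
    · simp [hR, pairsR]
  | c4 _ ih =>
    rename_i a w' hacc
    obtain ⟨A, X, lx, ly, hc, hrel, hL, hR⟩ := ih
    exact ⟨a, A, X, lx, ly, hc, hrel, by simp [hL], by simp [hR]⟩
  | c5 _ ih =>
    obtain ⟨A, X, lx, ly, hc, hrel, hL, hR⟩ := ih
    exact ⟨A, X, lx, ly, hc, hrel, by simp [hL], by simp [hR]⟩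
  | c6 _ ih =>
    obtain ⟨A, X, lx, ly, hc, hrel, hL, hR⟩ := ih
    exact ⟨A, X, lx, ly, hc, hrel, by simp [hL], by simp [hR]⟩
  | c1b _ ih =>
    obtain ⟨lx, ly, hrel, hL, hR⟩ := ih
    exact ⟨none, none, lx, ly, trivial, hrel, by simp [hL, encAnnXi], by simp [hR, encRef]⟩
  | c1o _ ih =>
    obtain ⟨A, X, lx, ly, hdis, _, hrel, hL, hR⟩ := ih
    refine ⟨some A, some X, lx, ly, fun a ha => Finset.disjoint_right.mp hdis ha, hrel,
      by simpa [encAnnXi] using hL, ?_⟩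
    simp only [projR_inr, hR, encRef]
    simp
  | c3c _ ih =>
    obtain ⟨lx, ly, hrel, hL, hR⟩ := ih
    refine ⟨∅, ∅, lx, ly, by simp, by simp, hrel, by simpa using hL, by simpa using hR⟩
  | c3l hlt _ ih =>
    obtain ⟨A, X, lx, ly, hdis, hlb, hrel, hL, hR⟩ := ih
    rename_i o a w' hacc
    have ha : ∀ b ∈ A ∪ X, a < b := fun b hb => hlb b hb a rfl
    have haA : a ∉ A := fun hmem => lt_irrefl a (ha a (Finset.mem_union_left _ hmem))
    have hsort : (insert a A).sort (· ≤ ·) = a :: A.sort (· ≤ ·) :=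
      Finset.sort_insert _ (fun b hb => le_of_lt (ha b (Finset.mem_union_left _ hb))) haA
    refine ⟨insert a A, X, lx, ly, ?_, ?_, hrel, ?_, hR⟩
    · rw [Finset.disjoint_left]
      rintro b hb hbX
      rcases Finset.mem_insert.mp hb with rfl | hbA
      · exact lt_irrefl b (ha b (Finset.mem_union_right _ hbX))
      · exact Finset.disjoint_left.mp hdis hbA hbX
    · intro b hb c hc
      have hca : c < a := hlt c hc
      rcases Finset.mem_union.mp hb with hbA | hbX
      · rcases Finset.mem_insert.mp hbA with rfl | hbA
        · exact hca
        · exact lt_trans hca (ha b (Finset.mem_union_left _ hbA))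
      · exact lt_trans hca (ha b (Finset.mem_union_right _ hbX))
    · simp [hsort, hL]
  | c3r hlt _ ih =>
    obtain ⟨A, X, lx, ly, hdis, hlb, hrel, hL, hR⟩ := ih
    rename_i o a w' hacc
    have ha : ∀ b ∈ A ∪ X, a < b := fun b hb => hlb b hb a rfl
    have haX : a ∉ X := fun hmem => lt_irrefl a (ha a (Finset.mem_union_right _ hmem))
    have hsort : (insert a X).sort (· ≤ ·) = a :: X.sort (· ≤ ·) :=
      Finset.sort_insert _ (fun b hb => le_of_lt (ha b (Finset.mem_union_right _ hb))) haX
    refine ⟨A, insert a X, lx, ly, ?_, ?_, hrel, hL, ?_⟩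
    · rw [Finset.disjoint_right]
      rintro b hb hbA
      rcases Finset.mem_insert.mp hb with rfl | hbX
      · exact lt_irrefl b (ha b (Finset.mem_union_left _ hbA))
      · exact Finset.disjoint_right.mp hdis hbX hbA
    · intro b hb c hc
      have hca : c < a := hlt c hc
      rcases Finset.mem_union.mp hb with hbA | hbX
      · exact lt_trans hca (ha b (Finset.mem_union_left _ hbA))
      · rcases Finset.mem_insert.mp hbX with rfl | hbX
        · exact hca
        · exact lt_trans hca (ha b (Finset.mem_union_right _ hbX))
    · simp [hsort, hR]
  | c0 _ ih =>
    obtain ⟨A, X, lx, ly, hc, hrel, hL, hR⟩ := ih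
    refine ⟨(A, lx), (X, ly), rtRel_iff.mpr ⟨hc, hrel⟩, ?_, ?_⟩
    · simp [phi, hL, pairsL]
    · simp [psiRT, hR, pairsR]

end RTProof

namespace RTProof
variable {α : Type} [LinearOrder α]

def tagged (A : Finset α) (a : α) : Xi α ⊕ Theta α :=
  if a ∈ A then Sum.inl (Sum.inr (Sum.inl a)) else Sum.inr (Sum.inr (Sum.inl a))

lemma projL_tagged (A : Finset α) (l : List α) :
    projL (l.map (tagged A)) =
      (l.filter (fun a => decide (a ∈ A))).map (fun a => Sum.inr (Sum.inl a)) := by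
  induction l with
  | nil => rfl
  | cons a l ih => by_cases h : a ∈ A <;> simp [tagged, h, ih]

lemma projR_tagged (A : Finset α) (l : List α) :
    projR (l.map (tagged A)) =
      (l.filter (fun a => !decide (a ∈ A))).map (fun a => Sum.inr (Sum.inl a)) := by
  induction l with
  | nil => rfl
  | cons a l ih => by_cases h : a ∈ A <;> simp [tagged, h, ih]

lemma sort_union_filter (A X : Finset α) (hdis : Disjoint A X) :
    ((A ∪ X).sort (· ≤ ·)).filter (fun a => decide (a ∈ A)) = A.sort (· ≤ ·) ∧
    ((A ∪ X).sort (· ≤ ·)).filter (fun a => !decide (a ∈ A)) = X.sort (· ≤ ·) := by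
  constructor
  · refine List.Perm.eq_of_pairwise'
      (List.Pairwise.sublist List.filter_sublist (Finset.pairwise_sort _ _))
      (Finset.pairwise_sort _ _) ?_
    refine List.perm_of_nodup_nodup_toFinset_eq
      ((Finset.sort_nodup _ _).filter _) (Finset.sort_nodup _ _) ?_
    rw [Finset.sort_toFinset]
    ext b
    simp only [List.mem_toFinset, List.mem_filter, Finset.mem_sort, Finset.mem_union,
      decide_eq_true_eq]
    constructor
    · rintro ⟨-, hb⟩; exact hb
    · intro hb; exact ⟨Or.inl hb, hb⟩
  · refine List.Perm.eq_of_pairwise'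
      (List.Pairwise.sublist List.filter_sublist (Finset.pairwise_sort _ _))
      (Finset.pairwise_sort _ _) ?_
    refine List.perm_of_nodup_nodup_toFinset_eq
      ((Finset.sort_nodup _ _).filter _) (Finset.sort_nodup _ _) ?_
    rw [Finset.sort_toFinset]
    ext b
    simp only [List.mem_toFinset, List.mem_filter, Finset.mem_sort, Finset.mem_union,
      Bool.not_eq_true', decide_eq_false_iff_not]
    constructor
    · rintro ⟨hb1 | hb1, hb2⟩
      · exact absurd hb1 hb2
      · exact hb1
    · intro hb; exact ⟨Or.inr hb, Finset.disjoint_right.mp hdis hb⟩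

lemma chainAcc (A : Finset α) :
    ∀ (l : List α) (o : Option α) (w), List.Pairwise (· < ·) l →
      (∀ b ∈ l, ∀ c ∈ o, c < b) → Accept .q2 w →
      Accept (.q3 o) (l.map (tagged A) ++ Sum.inr (Sum.inr (Sum.inr MSym.rang)) :: w) := by
  intro l
  induction l with
  | nil => intro o w _ _ h; exact Accept.c3c h
  | cons a l ih =>
    intro o w hs hlb h
    rw [List.pairwise_cons] at hs
    have h1 : Accept (.q3 (some a))
        (l.map (tagged A) ++ Sum.inr (Sum.inr (Sum.inr MSym.rang)) :: w) := by
      refine ih (some a) w hs.2 ?_ h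
      intro b hb c hc
      obtain rfl : a = c := by simpa using hc
      exact hs.1 b hb
    have hoa : ∀ c ∈ o, c < a := fun c hc => hlb a List.mem_cons_self c hc
    by_cases hA : a ∈ A
    · simpa [tagged, hA] using Accept.c3l hoa h1
    · simpa [tagged, hA] using Accept.c3r hoa h1

lemma blockAcc (A X : Option (Finset α)) (hc : compat A X) (w : List (Xi α ⊕ Theta α))
    (h : Accept .q2 w) :
    ∃ u, Accept .q1 (u ++ w) ∧ projL (u ++ w) = encAnnXi A ++ projL w ∧
      projR (u ++ w) = encRef X ++ projR w := by
  match A, X, hc with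
  | none, none, _ =>
    exact ⟨[Sum.inl (Sum.inr (Sum.inr MSym.bullet))], Accept.c1b h,
      by simp [encAnnXi], by simp [encRef]⟩
  | some A, some X, hc =>
    have hdis : Disjoint A X := Finset.disjoint_right.mpr hc
    obtain ⟨hfA, hfX⟩ := sort_union_filter A X hdis
    refine ⟨Sum.inr (Sum.inr (Sum.inr MSym.lang)) ::
      (((A ∪ X).sort (· ≤ ·)).map (tagged A) ++ [Sum.inr (Sum.inr (Sum.inr MSym.rang))]),
      ?_, ?_, ?_⟩
    · have hch := chainAcc A ((A ∪ X).sort (· ≤ ·)) none w (Finset.sortedLT_sort _).pairwise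
        (by simp) h
      have := Accept.c1o hch
      simpa using this
    · simp [projL_tagged, hfA, encAnnXi]
    · simp [projR_tagged, hfX, encRef]

lemma pairsAcc : ∀ {lx ly}, Rel lx ly →
    ∃ w, Accept (.q2 : St α) w ∧ projL w = pairsL lx ++ [Sum.inr (Sum.inr MSym.rang)] ∧
      projR w = pairsR ly := by
  intro lx ly hrel
  induction hrel with
  | nil =>
    exact ⟨[Sum.inl (Sum.inr (Sum.inr MSym.rang))], Accept.c2close Accept.f,
      by simp [pairsL], by simp [pairsR]⟩
  | cons hpq hrel ih =>
    rename_i p q lx' ly'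
    obtain ⟨hev, hcomp⟩ := hpq
    obtain ⟨w, hw, hL, hR⟩ := ih
    obtain ⟨u, hu, huL, huR⟩ := blockAcc p.2 q.2 hcomp w hw
    refine ⟨Sum.inl (Sum.inr (Sum.inr MSym.comma)) :: Sum.inl (Sum.inl p.1) ::
      Sum.inr (Sum.inl p.1) :: Sum.inl (Sum.inr (Sum.inr MSym.comma)) :: (u ++ w),
      ?_, ?_, ?_⟩
    · exact Accept.c2comma (Accept.c4 (Accept.c5 (Accept.c6 hu)))
    · simp [pairsL, huL, hL]
    · simp [pairsR, huR, hR, ← hev]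

lemma forward {x y : FLObs α} (h : rtRel x y) :
    ∃ w, Accept (.q0 : St α) w ∧ projL w = phi x ∧ projR w = psiRT y := by
  obtain ⟨A, lx⟩ := x
  obtain ⟨X, ly⟩ := y
  obtain ⟨hc, hrel⟩ := rtRel_iff.mp h
  obtain ⟨w, hw, hL, hR⟩ := pairsAcc hrel
  obtain ⟨u, hu, huL, huR⟩ := blockAcc A X hc w hw
  exact ⟨Sum.inl (Sum.inr (Sum.inr MSym.lang)) :: (u ++ w), Accept.c0 hu,
    by simp [phi, huL, hL, pairsL], by simp [psiRT, huR, hR, pairsR]⟩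

end RTProof


/-- The refusal testing model `RT` is rational: (a) there is an NFA with finitely many
states over `Ξ ⊕ Θ` recognising `{(φ x, ψ y) : (x, y) ∈ rt_Σ}`, and (b) `ψ` is
order-reflecting: whenever `ψ y₁` is a prefix of `ψ y₂` then `y₁ ≼ y₂` in the relation
induced by `rt_Σ` from the extension order on `FL_Σ`. -/
theorem stmt11 {α : Type} [Fintype α] [Nonempty α] [LinearOrder α] :
    (∃ (n : ℕ) (A : NFA (Xi α ⊕ Theta α) (Fin n)),
      Recognises A (fun s t => ∃ (x y : FLObs α), s = phi x ∧ t = psiRT y ∧ rtRel x y)) ∧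
    (∀ y₁ y₂ : FLObs α, psiRT y₁ <+: psiRT y₂ → inducedRel extLE rtRel y₁ y₂) := by
  constructor
  · obtain ⟨M', hM'⟩ := RTProof.nfa_transport (RTProof.NFA0 α)
      (Fintype.equivFin (RTProof.St α))
    refine ⟨_, M', ?_⟩
    intro s t
    constructor
    · rintro ⟨x, y, rfl, rfl, hxy⟩
      obtain ⟨w, hw, hL, hR⟩ := RTProof.forward hxy
      exact ⟨w, by rw [hM']; exact (RTProof.accepts_iff w).mpr hw, hL, hR⟩
    · rintro ⟨w, hw, rfl, rfl⟩
      rw [hM'] at hw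
      obtain ⟨x, y, hxy, hL, hR⟩ := RTProof.acc_mot ((RTProof.accepts_iff w).mp hw)
      exact ⟨x, y, hL, hR, hxy⟩
  · exact RTProof.partB
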